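/- Let N, k, J be positive integers with N > 2^J (k+1), let Φ_{k,1} and Φ_{k,2^J} be the circulant matrices of the stencils φ_{k,1} and φ_{k,2^J}, and for each i let P_{2^i} be the N×N 0-1 shift-sum matrix with shift 2^i. Then for every permutation σ of {0, 1, …, J−1}, the decomposition Φ_{k,2^J} = P_{2^{σ(J−1)}}^{k+1} P_{2^{σ(J−2)}}^{k+1} ⋯ P_{2^{σ(0)}}^{k+1} Φ_{k,1} holds; i.e., the product may be taken in any order. -/

import Mathlib

open Finset Matrix

/-- The scale-`j` order-`k` multiscale finite-difference stencil, as a vector in `ℝ^N`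
(0-indexed by naturals `m < N`). -/
noncomputable def phiR (N k j : ℕ) (m : ℕ) : ℝ :=
  if m = 0 then (-1 : ℝ) ^ k
  else if m ≤ N - j * (k + 1) then 0
  else (-1 : ℝ) ^ (k + (N - m) / j) * (Nat.choose k ((N - m) / j) : ℝ)

/-- The `N × N` circulant matrix of the stencil `φ_{k,j}`:
`(Φ_{k,j})_{m,n} = (φ_{k,j})_{(m - n) mod N}`. -/
noncomputable def PhiMat (N k j : ℕ) : Matrix (Fin N) (Fin N) ℝ :=
  Matrix.of fun m n => phiR N k j (((m : ℕ) + N - (n : ℕ)) % N)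

/-- The `N × N` 0-1 shift-sum matrix `P_s` (0-indexed): entry `(m, n)` is `1` if `n = m`
or `n = (m + s) mod N`, and `0` otherwise. -/
def Pmat (N s : ℕ) : Matrix (Fin N) (Fin N) ℝ :=
  Matrix.of fun m n =>
    if ((n : ℕ) = (m : ℕ) ∨ (n : ℕ) = ((m : ℕ) + s) % N) then 1 else 0

open Polynomial

noncomputable section

/-- The shift matrix `S` with `S m n = 1` iff `n = m + 1 (mod N)`. -/
def Smat (N : ℕ) : Matrix (Fin N) (Fin N) ℝ :=
  Matrix.of fun m n => if (n : ℕ) = ((m : ℕ) + 1) % N then 1 else 0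

lemma Smat_pow (N r : ℕ) (m n : Fin N) :
    ((Smat N ^ r) m n) = if (n : ℕ) = ((m : ℕ) + r) % N then 1 else 0 := by
  induction r generalizing n with
  | zero =>
    simp only [pow_zero, Matrix.one_apply, Nat.add_zero, Nat.mod_eq_of_lt m.isLt, Fin.ext_iff]
    exact if_congr (by constructor <;> exact fun h => h.symm) rfl rfl
  | succ r ih =>
    have hN : 0 < N := m.pos
    rw [pow_succ, Matrix.mul_apply]
    set t₀ : Fin N := ⟨((m : ℕ) + r) % N, Nat.mod_lt _ hN⟩ with ht₀
    have key : ∀ t : Fin N, (Smat N ^ r) m t * Smat N t n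
        = if t = t₀ then (if (n : ℕ) = (((m : ℕ) + r) % N + 1) % N then 1 else 0) else 0 := by
      intro t
      rw [ih]
      by_cases h : t = t₀
      · subst h
        simp [Smat, ht₀]
      · have hne : (t : ℕ) ≠ ((m : ℕ) + r) % N := by
          intro hc; exact h (Fin.ext hc)
        rw [if_neg hne, if_neg h, zero_mul]
    rw [Finset.sum_congr rfl fun t _ => key t, Finset.sum_ite_eq' Finset.univ t₀,
      if_pos (Finset.mem_univ t₀)]
    rw [Nat.mod_add_mod, ← add_assoc]

lemma aeval_expand (N M : ℕ) (hMN : M ≤ N) (c : ℕ → ℝ) (m n : Fin N) :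
    ((Polynomial.aeval (Smat N)) (∑ r ∈ Finset.range M, C (c r) * X ^ r)) m n
      = if ((n : ℕ) + N - (m : ℕ)) % N < M then c (((n : ℕ) + N - (m : ℕ)) % N) else 0 := by
  have hN : 0 < N := m.pos
  set r₀ : ℕ := ((n : ℕ) + N - (m : ℕ)) % N with hr₀
  have hr₀N : r₀ < N := Nat.mod_lt _ hN
  have hkey : ((m : ℕ) + r₀) % N = (n : ℕ) := by
    rw [hr₀, Nat.add_mod_mod]
    have h1 : (m : ℕ) + ((n : ℕ) + N - (m : ℕ)) = (n : ℕ) + N := by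
      have := m.isLt; omega
    rw [h1, Nat.add_mod_right, Nat.mod_eq_of_lt n.isLt]
  have hiff : ∀ r < N, (((n : ℕ) = ((m : ℕ) + r) % N) ↔ r = r₀) := by
    intro r hr
    constructor
    · intro hc
      have h2 : ((m : ℕ) + r) % N = ((m : ℕ) + r₀) % N := by rw [hkey, ← hc]
      have h3 : r % N = r₀ % N := Nat.ModEq.add_left_cancel' (m : ℕ) h2
      rwa [Nat.mod_eq_of_lt hr, Nat.mod_eq_of_lt hr₀N] at h3
    · intro hc; rw [hc, hkey]
  rw [map_sum, Matrix.sum_apply]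
  have hterm : ∀ r ∈ Finset.range M,
      ((Polynomial.aeval (Smat N)) (C (c r) * X ^ r)) m n
        = if r = r₀ then c r else 0 := by
    intro r hrm
    have hr : r < N := lt_of_lt_of_le (Finset.mem_range.mp hrm) hMN
    rw [_root_.map_mul, _root_.map_pow, aeval_X, aeval_C]
    have hentry : (algebraMap ℝ (Matrix (Fin N) (Fin N) ℝ) (c r) * Smat N ^ r) m n
        = c r * (Smat N ^ r) m n := by
      rw [Algebra.algebraMap_eq_smul_one, smul_mul_assoc, one_mul, Matrix.smul_apply,
        smul_eq_mul]
    rw [hentry, Smat_pow]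
    rw [if_congr (hiff r hr) rfl rfl]
    by_cases h : r = r₀ <;> simp [h]
  rw [Finset.sum_congr rfl hterm, Finset.sum_ite_eq' (Finset.range M) r₀]
  simp [Finset.mem_range]

/-- The stencil polynomial `(-1)^k (1 + X + ... + X^(j-1)) (1 - X^j)^k`. -/
def phiPoly (k j : ℕ) : Polynomial ℝ :=
  C ((-1) ^ k) * (∑ a ∈ Finset.range j, X ^ a) * (1 - X ^ j) ^ k

lemma phiPoly_sum (k j : ℕ) (hj : 0 < j) :
    phiPoly k j = ∑ r ∈ Finset.range (j * (k + 1)),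
      C ((-1 : ℝ) ^ (k + r / j) * (Nat.choose k (r / j) : ℝ)) * X ^ r := by
  have h1 : ((1 : ℝ[X]) - X ^ j) ^ k
      = ∑ q ∈ Finset.range (k + 1), C ((-1 : ℝ) ^ q * (Nat.choose k q : ℝ)) * X ^ (j * q) := by
    rw [sub_eq_add_neg, add_comm, add_pow]
    refine Finset.sum_congr rfl fun q _ => ?_
    rw [one_pow, mul_one, neg_pow, C_mul, pow_mul]
    simp only [C_pow, C_neg, C_1, Polynomial.C_eq_natCast]
    ring
  rw [phiPoly, h1, Finset.mul_sum]
  have expand : ∀ q ∈ Finset.range (k + 1),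
      (C ((-1:ℝ)^k) * ∑ a ∈ Finset.range j, X ^ a) *
          (C ((-1:ℝ)^q * (Nat.choose k q : ℝ)) * X ^ (j * q))
        = ∑ a ∈ Finset.range j, C ((-1:ℝ)^(k+q) * (Nat.choose k q : ℝ)) * X ^ (j * q + a) := by
    intro q _
    rw [Finset.mul_sum, Finset.sum_mul]
    refine Finset.sum_congr rfl fun a _ => ?_
    simp only [pow_add, C_mul]
    ring
  rw [Finset.sum_congr rfl expand, ← Finset.sum_product']
  refine Finset.sum_nbij' (fun p : ℕ × ℕ => j * p.1 + p.2) (fun r => (r / j, r % j))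
    ?_ ?_ ?_ ?_ ?_
  · rintro ⟨q, a⟩ hp
    simp only [Finset.mem_product, Finset.mem_range] at hp
    simp only [Finset.mem_range]
    have e1 : j * (q + 1) ≤ j * (k + 1) := Nat.mul_le_mul_left j hp.1
    have e2 : j * (q + 1) = j * q + j := by ring
    omega
  · intro r hr
    simp only [Finset.mem_range] at hr
    simp only [Finset.mem_product, Finset.mem_range]
    refine ⟨Nat.div_lt_of_lt_mul hr, Nat.mod_lt _ hj⟩
  · rintro ⟨q, a⟩ hp
    simp only [Finset.mem_product, Finset.mem_range] at hp
    have h2 : (j * q + a) % j = a := by rw [Nat.mul_add_mod, Nat.mod_eq_of_lt hp.2]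
    have h3 : (j * q + a) / j = q := by
      rw [Nat.mul_add_div hj, Nat.div_eq_of_lt hp.2, add_zero]
    simp [h2, h3]
  · intro r _
    exact Nat.div_add_mod r j
  · rintro ⟨q, a⟩ hp
    simp only [Finset.mem_product, Finset.mem_range] at hp
    have h3 : (j * q + a) / j = q := by
      rw [Nat.mul_add_div hj, Nat.div_eq_of_lt hp.2, add_zero]
    simp only [h3]

lemma phiPoly_double (k j : ℕ) :
    phiPoly k (2 * j) = ((1 : ℝ[X]) + X ^ j) ^ (k + 1) * phiPoly k j := by
  have hgeom : (∑ a ∈ Finset.range (2 * j), (X : ℝ[X]) ^ a)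
      = (1 + X ^ j) * ∑ a ∈ Finset.range j, X ^ a := by
    rw [two_mul, Finset.sum_range_add]
    simp only [pow_add]
    rw [← Finset.mul_sum, add_mul, one_mul]
  have hpow : ((1 : ℝ[X]) - X ^ (2 * j)) = (1 + X ^ j) * (1 - X ^ j) := by
    rw [two_mul, pow_add]; ring
  rw [phiPoly, phiPoly, hgeom, hpow, mul_pow, pow_succ]
  ring

lemma PhiMat_poly (N k j : ℕ) (hj : 0 < j) (h : j * (k + 1) < N) :
    PhiMat N k j = (Polynomial.aeval (Smat N)) (phiPoly k j) := by
  have hN : 0 < N := lt_trans (by positivity) h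
  ext m n
  rw [phiPoly_sum k j hj, aeval_expand N (j * (k + 1)) h.le]
  show phiR N k j (((m : ℕ) + N - (n : ℕ)) % N) = _
  set d : ℕ := ((m : ℕ) + N - (n : ℕ)) % N with hd
  set r₀ : ℕ := ((n : ℕ) + N - (m : ℕ)) % N with hr₀def
  have hdN : d < N := Nat.mod_lt _ hN
  have hr₀N : r₀ < N := Nat.mod_lt _ hN
  have hcas : d + r₀ = 0 ∨ d + r₀ = N := by
    have hsum : N ∣ (d + r₀) := by
      apply Nat.dvd_of_mod_eq_zero
      rw [hd, hr₀def, Nat.add_mod_mod, Nat.mod_add_mod]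
      have h1 : ((m : ℕ) + N - (n : ℕ)) + ((n : ℕ) + N - (m : ℕ)) = 2 * N := by
        have := m.isLt; have := n.isLt; omega
      rw [h1]
      simp [Nat.mul_mod_right]
    obtain ⟨t, ht⟩ := hsum
    match t, ht with
    | 0, ht => left; omega
    | 1, ht => right; omega
    | (t+2), ht =>
      exfalso
      have h2 : N * (t + 2) = N * t + N + N := by ring
      omega
  rw [phiR]
  by_cases hd0 : d = 0
  · have hr00 : r₀ = 0 := by omega
    rw [if_pos hd0, hr00]
    have hpos : (0 : ℕ) < j * (k + 1) := by positivity
    rw [if_pos hpos]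
    simp
  · have hr0 : r₀ = N - d := by omega
    rw [if_neg hd0]
    by_cases hc : d ≤ N - j * (k + 1)
    · rw [if_pos hc]
      have hnot : ¬ (r₀ < j * (k + 1)) := by omega
      rw [if_neg hnot]
    · rw [if_neg hc]
      have h2 : r₀ < j * (k + 1) := by omega
      rw [if_pos h2]
      have h3 : N - d = r₀ := by omega
      rw [h3]

lemma Pmat_poly (N s : ℕ) (hs : 0 < s) (hsN : s < N) :
    Pmat N s = (Polynomial.aeval (Smat N)) ((1 : ℝ[X]) + X ^ s) := by
  ext m n
  rw [_root_.map_add, _root_.map_one, _root_.map_pow, aeval_X]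
  show (if ((n : ℕ) = (m : ℕ) ∨ (n : ℕ) = ((m : ℕ) + s) % N) then (1:ℝ) else 0)
    = ((1 : Matrix (Fin N) (Fin N) ℝ) + Smat N ^ s) m n
  rw [Matrix.add_apply, Matrix.one_apply, Smat_pow]
  have hms : ((m : ℕ) + s) % N ≠ (m : ℕ) := by
    rcases Nat.lt_or_ge ((m : ℕ) + s) N with hlt | hge
    · rw [Nat.mod_eq_of_lt hlt]; omega
    · have h2 : ((m : ℕ) + s) % N = (m : ℕ) + s - N := by
        rw [Nat.mod_eq_sub_mod hge, Nat.mod_eq_of_lt (by have := m.isLt; omega)]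
      rw [h2]; have := m.isLt; omega
  by_cases h1 : (n : ℕ) = (m : ℕ)
  · have hmn : m = n := Fin.ext h1.symm
    have h2 : (n : ℕ) ≠ ((m : ℕ) + s) % N := by rw [h1]; exact fun hc => hms hc.symm
    simp [h1, hmn, h2, Ne.symm hms]
  · have hmn : m ≠ n := fun hc => h1 (congrArg Fin.val hc).symm
    by_cases h2 : (n : ℕ) = ((m : ℕ) + s) % N
    · simp [h1, h2, hmn]
    · simp [h1, h2, hmn]

lemma key_prod (k J : ℕ) :
    (∏ i : Fin J, ((1 : ℝ[X]) + X ^ (2 ^ (i : ℕ))) ^ (k + 1)) * phiPoly k 1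
      = phiPoly k (2 ^ J) := by
  induction J with
  | zero => simp
  | succ J ih =>
    rw [Fin.prod_univ_castSucc]
    simp only [Fin.coe_castSucc, Fin.val_last]
    have h2 : (2 : ℕ) ^ (J + 1) = 2 * 2 ^ J := by ring
    rw [h2, phiPoly_double, ← ih]
    ring

end

theorem PhiMat_dyadic_decomposition_any_order (N k J : ℕ) (hN : 0 < N) (hk : 0 < k)
    (hJ : 0 < J) (h : 2 ^ J * (k + 1) < N) (σ : Equiv.Perm (Fin J)) :
    PhiMat N k (2 ^ J) =
      (((List.finRange J).reverse.map fun i => (Pmat N (2 ^ ((σ i : Fin J) : ℕ))) ^ (k + 1)).prod) *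
        PhiMat N k 1 := by
  have h2J : (0:ℕ) < 2 ^ J := Nat.pow_pos (by norm_num)
  have h1N : 1 * (k + 1) < N := by
    calc 1 * (k + 1) ≤ 2 ^ J * (k + 1) := Nat.mul_le_mul_right _ h2J
    _ < N := h
  have hPfac : ∀ i : Fin J, (Pmat N (2 ^ ((σ i : Fin J) : ℕ))) ^ (k + 1)
      = (Polynomial.aeval (Smat N)) (((1 : ℝ[X]) + X ^ (2 ^ ((σ i : Fin J) : ℕ))) ^ (k + 1)) := by
    intro i
    rw [_root_.map_pow]
    congr 1
    apply Pmat_poly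
    · positivity
    · have hlt : 2 ^ ((σ i : Fin J) : ℕ) < 2 ^ J :=
        Nat.pow_lt_pow_right (by norm_num) (σ i).isLt
      calc 2 ^ ((σ i : Fin J) : ℕ) < 2 ^ J := hlt
      _ ≤ 2 ^ J * (k + 1) := Nat.le_mul_of_pos_right _ (by omega)
      _ < N := h
  rw [PhiMat_poly N k (2 ^ J) h2J h, PhiMat_poly N k 1 (by norm_num) h1N]
  have hmap : ((List.finRange J).reverse.map
        fun i => (Pmat N (2 ^ ((σ i : Fin J) : ℕ))) ^ (k + 1))
      = ((List.finRange J).reverse.map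
          fun i => ((1 : ℝ[X]) + X ^ (2 ^ ((σ i : Fin J) : ℕ))) ^ (k + 1)).map
          (Polynomial.aeval (Smat N)) := by
    rw [List.map_map]
    exact List.map_congr_left fun i _ => hPfac i
  rw [hmap, ← map_list_prod (Polynomial.aeval (Smat N) : ℝ[X] →ₐ[ℝ] _), ← _root_.map_mul]
  congr 1
  have hlist : (((List.finRange J).reverse.map
        (fun i => ((1 : ℝ[X]) + X ^ (2 ^ ((σ i : Fin J) : ℕ))) ^ (k + 1)))).prod
      = ∏ i : Fin J, ((1 : ℝ[X]) + X ^ (2 ^ ((σ i : Fin J) : ℕ))) ^ (k + 1) := by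
    rw [List.map_reverse, List.prod_reverse, ← Fin.prod_univ_def]
  rw [hlist]
  have hperm : (∏ i : Fin J, ((1 : ℝ[X]) + X ^ (2 ^ ((σ i : Fin J) : ℕ))) ^ (k + 1))
      = ∏ i : Fin J, ((1 : ℝ[X]) + X ^ (2 ^ (i : ℕ))) ^ (k + 1) :=
    Equiv.prod_comp σ (fun i => ((1:ℝ[X]) + X ^ (2 ^ (i : ℕ))) ^ (k + 1))
  rw [hperm, key_prod]
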